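/- Let B be a nonempty open metric ball in the torus 𝕋^d = ℝ^d/ℤ^d. Then there exist a finite subgroup G ⊂ 𝕋^d and an orthogonal projection P on L²(𝕋^d) localized on B such that the projections T_γ P T_{-γ}, γ ∈ G, are pairwise orthogonal and Σ_{γ∈G} T_γ P T_{-γ} f = f for all f ∈ L²(𝕋^d). -/

import Mathlib

open MeasureTheory Metric
open scoped RealInnerProductSpace Pointwise ENNReal
noncomputable section

/-- The torus `𝕋^d = ℝ^d/ℤ^d`. -/
abbrev Torus (d : ℕ) : Type := Fin d → AddCircle (1 : ℝ)

/-- The translation operator `T_γ f = f(· - γ)` on `L²(𝕋^d)`. -/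
def transTorus {d : ℕ} (γ : Torus d) :
    Lp ℝ 2 (volume : Measure (Torus d)) →L[ℝ] Lp ℝ 2 (volume : Measure (Torus d)) :=
  (Lp.compMeasurePreservingₗᵢ ℝ (fun x : Torus d => x - γ)
    (measurePreserving_sub_right volume γ)).toContinuousLinearMap

open Filter Set

namespace TorusAux

variable {α : Type*} [MeasurableSpace α] {μ : Measure α}

lemma indicator_ae_congr {s : Set α} {F G : α → ℝ} (h : F =ᵐ[μ] G) :
    s.indicator F =ᵐ[μ] s.indicator G := by
  classical
  filter_upwards [h] with x hx
  rw [Set.indicator_apply, Set.indicator_apply, hx]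

/-- coeFn of a finite sum in Lp. -/
lemma coeFn_finset_sum {ι : Type*} (F : Finset ι) (h : ι → Lp ℝ 2 μ) :
    ⇑(∑ i ∈ F, h i) =ᵐ[μ] fun x => ∑ i ∈ F, h i x := by
  classical
  induction F using Finset.induction_on with
  | empty => simp only [Finset.sum_empty]; exact Lp.coeFn_zero (E := ℝ) (p := 2) (μ := μ)
  | insert _ _ hnot ih =>
      rename_i a F'
      rw [Finset.sum_insert hnot]
      filter_upwards [Lp.coeFn_add (h a) (∑ i ∈ F', h i), ih] with x h1 h2
      simp only [h1, Pi.add_apply, h2, Finset.sum_insert hnot]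

variable (s : Set α) (hs : MeasurableSet s)

/-- Multiplication by the indicator of a measurable set, as a linear map on L². -/
def mulIndL : Lp ℝ 2 μ →ₗ[ℝ] Lp ℝ 2 μ where
  toFun f := ((Lp.memLp f).indicator hs).toLp (s.indicator ⇑f)
  map_add' f g := by
    classical
    rw [← MemLp.toLp_add]
    refine MemLp.toLp_congr _ _ ((indicator_ae_congr (Lp.coeFn_add f g)).trans
      (Eventually.of_forall fun x => ?_))
    by_cases hx : x ∈ s <;> simp [Set.indicator_apply, hx]
  map_smul' c f := by
    classical
    show ((Lp.memLp (c • f)).indicator hs).toLp (s.indicator ⇑(c • f)) =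
      (RingHom.id ℝ) c • ((Lp.memLp f).indicator hs).toLp (s.indicator ⇑f)
    rw [RingHom.id_apply, ← MemLp.toLp_const_smul]
    refine MemLp.toLp_congr _ _ ((indicator_ae_congr (Lp.coeFn_smul c f)).trans
      (Eventually.of_forall fun x => ?_))
    by_cases hx : x ∈ s <;> simp [Set.indicator_apply, hx]

lemma mulIndL_norm_le (f : Lp ℝ 2 μ) : ‖mulIndL s hs f‖ ≤ ‖f‖ := by
  have h1 : ‖mulIndL s hs f‖ = (eLpNorm (s.indicator ⇑f) 2 μ).toReal :=
    by show ‖((Lp.memLp f).indicator hs).toLp (s.indicator ⇑f)‖ = _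
       exact Lp.norm_toLp (p := 2) (μ := μ) (s.indicator ⇑f) ((Lp.memLp f).indicator hs)
  rw [h1, Lp.norm_def]
  exact ENNReal.toReal_mono (Lp.eLpNorm_ne_top f) (eLpNorm_indicator_le _)

/-- Multiplication by the indicator of a measurable set, as a continuous linear map on L². -/
def mulInd : Lp ℝ 2 μ →L[ℝ] Lp ℝ 2 μ :=
  LinearMap.mkContinuous (mulIndL s hs) 1
    (fun f => by rw [one_mul]; exact mulIndL_norm_le s hs f)

lemma mulInd_coeFn (f : Lp ℝ 2 μ) :
    ⇑(mulInd s hs f) =ᵐ[μ] s.indicator ⇑f :=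
  by show ⇑(((Lp.memLp f).indicator hs).toLp (s.indicator ⇑f)) =ᵐ[μ] _
     exact MemLp.coeFn_toLp (p := 2) (μ := μ) (f := s.indicator ⇑f) ((Lp.memLp f).indicator hs)

lemma mulInd_selfAdjoint (f g : Lp ℝ 2 μ) :
    ⟪mulInd s hs f, g⟫ = ⟪f, mulInd s hs g⟫ := by
  classical
  rw [L2.inner_def, L2.inner_def]
  refine integral_congr_ae ?_
  filter_upwards [mulInd_coeFn s hs f, mulInd_coeFn s hs g] with x h1 h2
  rw [h1, h2]
  by_cases hx : x ∈ s <;>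
    simp [Set.indicator_apply, hx, RCLike.inner_apply, starRingEnd_apply, mul_comm]

lemma mulInd_idem (f : Lp ℝ 2 μ) :
    mulInd s hs (mulInd s hs f) = mulInd s hs f := by
  classical
  apply Lp.ext
  filter_upwards [mulInd_coeFn s hs (mulInd s hs f), mulInd_coeFn s hs f] with x h1 h2
  rw [h1]
  by_cases hx : x ∈ s
  · simp [Set.indicator_apply, hx]
  · rw [Set.indicator_of_notMem hx]
    rw [Set.indicator_of_notMem hx] at h2
    exact h2.symm



local notation "𝕊" => AddCircle (1 : ℝ)

/-- The (half-open) arc of length `w` starting at `a`. -/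
def arc (a w : ℝ) : Set 𝕊 := (fun t : ℝ => (t : 𝕊)) '' Set.Ico a (a + w)

lemma coe_toIcoMod (a t : ℝ) : ((toIcoMod zero_lt_one a t : ℝ) : 𝕊) = (t : 𝕊) := by
  rw [QuotientAddGroup.eq_iff_sub_mem, toIcoMod_sub_self]
  apply AddSubgroup.zsmul_mem_zmultiples

lemma coe_mem_arc_iff {a w : ℝ} (hw : w ≤ 1) (t : ℝ) :
    ((t : ℝ) : 𝕊) ∈ arc a w ↔ toIcoMod zero_lt_one a t < a + w := by
  constructor
  · rintro ⟨S, hS, hSe⟩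
    have hk : S - t ∈ AddSubgroup.zmultiples (1 : ℝ) :=
      (QuotientAddGroup.eq_iff_sub_mem).mp hSe
    obtain ⟨k, hk⟩ := AddSubgroup.mem_zmultiples_iff.mp hk
    have hkr : (k : ℝ) = S - t := by simpa [zsmul_eq_mul] using hk
    have ht : t = S + (-k) • (1 : ℝ) := by
      rw [zsmul_eq_mul]; push_cast; linarith
    have h2 : toIcoMod zero_lt_one a t = S := by
      rw [ht, toIcoMod_add_zsmul]
      exact (toIcoMod_eq_self zero_lt_one).mpr ⟨hS.1, lt_of_lt_of_le hS.2 (by linarith)⟩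
    rw [h2]; exact hS.2
  · intro h
    exact ⟨toIcoMod zero_lt_one a t, ⟨(toIcoMod_mem_Ico zero_lt_one a t).1, h⟩, coe_toIcoMod a t⟩

lemma arc_eq_preimage {a w : ℝ} (hw : w ≤ 1) :
    arc a w = (fun x : 𝕊 => (AddCircle.equivIco 1 a x : ℝ)) ⁻¹' Set.Iio (a + w) := by
  ext x
  induction x using QuotientAddGroup.induction_on with
  | H t =>
    have hrfl : (AddCircle.equivIco 1 a ((t : ℝ) : 𝕊) : ℝ) = toIcoMod zero_lt_one a t := rfl
    simp only [Set.mem_preimage, Set.mem_Iio, hrfl, coe_mem_arc_iff hw]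

lemma measurableSet_arc {a w : ℝ} (hw : w ≤ 1) : MeasurableSet (arc a w) := by
  rw [arc_eq_preimage hw]
  exact (measurable_subtype_coe.comp (AddCircle.measurableEquivIco 1 a).measurable)
    measurableSet_Iio

set_option maxHeartbeats 1000000 in
lemma existsUnique_arc_shift (n : ℕ) (hn : 0 < n) (a : ℝ) (x : 𝕊) :
    ∃! j : Fin n, x - ((((j : ℕ) : ℝ) * (n : ℝ)⁻¹ : ℝ) : 𝕊) ∈ arc a (n : ℝ)⁻¹ := by
  obtain ⟨t, rfl⟩ := QuotientAddGroup.mk_surjective x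
  set u : ℝ := (n : ℝ)⁻¹ with hu_def
  have hn' : (0 : ℝ) < n := by exact_mod_cast hn
  have hu : 0 < u := by positivity
  have hun : (n : ℝ) * u = 1 := mul_inv_cancel₀ (ne_of_gt hn')
  have hn1 : (1 : ℝ) ≤ n := by exact_mod_cast hn
  have hu1 : u ≤ 1 := by
    rw [hu_def]
    exact inv_le_one_of_one_le₀ hn1
  set T : ℝ := toIcoMod zero_lt_one a t with hT_def
  have hT : T ∈ Set.Ico a (a + 1) := toIcoMod_mem_Ico zero_lt_one a t
  set m : ℤ := ⌊(T - a) * n⌋ with hm_def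
  have hm0 : 0 ≤ m := Int.floor_nonneg.mpr (by nlinarith [hT.1])
  have hmn : m < n := Int.floor_lt.mpr (by push_cast; nlinarith [hT.2])
  -- t = T + k·1 for some integer k
  have htT : ∃ k : ℤ, t = T + (k : ℝ) := ⟨toIcoDiv zero_lt_one a t, by
    have h := self_sub_toIcoMod zero_lt_one a t
    rw [← hT_def, zsmul_eq_mul, mul_one] at h
    linarith⟩
  have key : ∀ j : Fin n,
      (((t : ℝ) : 𝕊) - ((((j : ℕ) : ℝ) * u : ℝ) : 𝕊) ∈ arc a u) ↔ ((j : ℕ) : ℤ) = m := by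
    intro j
    have hsub : ((t : ℝ) : 𝕊) - ((((j : ℕ) : ℝ) * u : ℝ) : 𝕊)
        = (((t - (j : ℕ) * u : ℝ)) : 𝕊) := by
      rw [← QuotientAddGroup.mk_sub]
    have hmod : toIcoMod zero_lt_one a (t - (j : ℕ) * u)
        = toIcoMod zero_lt_one a (T - (j : ℕ) * u) := by
      obtain ⟨k, hk⟩ := htT
      rw [hk, show T + (k : ℝ) - (j : ℕ) * u = (T - (j : ℕ) * u) + k • (1:ℝ) by
        rw [zsmul_eq_mul, mul_one]; ring, toIcoMod_add_zsmul]
    rw [hsub, coe_mem_arc_iff hu1, hmod]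
    have hj1 : ((j : ℕ) : ℝ) ≤ (n : ℝ) - 1 := by
      have h := Nat.succ_le_of_lt j.isLt
      have h' : ((j : ℕ) : ℝ) + 1 ≤ (n : ℝ) := by exact_mod_cast h
      linarith
    have hj0 : (0 : ℝ) ≤ ((j : ℕ) : ℝ) := by positivity
    constructor
    · intro h
      set S : ℝ := toIcoMod zero_lt_one a (T - (j : ℕ) * u) with hS_def
      have hS : S ∈ Set.Ico a (a + 1) := toIcoMod_mem_Ico zero_lt_one a _
      have hSu : S < a + u := h
      set k : ℤ := toIcoDiv zero_lt_one a (T - (j : ℕ) * u) with hk_def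
      have hkr : (k : ℝ) = T - (j : ℕ) * u - S := by
        have h := self_sub_toIcoMod zero_lt_one a (T - (j : ℕ) * u)
        rw [← hS_def, zsmul_eq_mul, mul_one] at h
        linarith
      have hju : ((j : ℕ) : ℝ) * u ≤ 1 - u := by nlinarith
      have hk1 : (k : ℝ) < 1 := by nlinarith [hT.2, hS.1]
      have hk2 : (-1 : ℝ) < k := by nlinarith [hT.1, hS.2]
      have hk0 : k = 0 := by
        have h1 : k < 1 := by exact_mod_cast hk1
        have h2 : -1 < k := by exact_mod_cast hk2
        omega
      rw [hk0] at hkr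
      simp only [Int.cast_zero] at hkr
      have hSeq : S = T - (j : ℕ) * u := by linarith
      -- now a ≤ T - j u < a + u
      have hb1 : ((j : ℕ) : ℝ) ≤ (T - a) * n := by nlinarith [hS.1]
      have hb2 : (T - a) * n < (j : ℕ) + 1 := by nlinarith [hSu]
      rw [hm_def]
      symm
      rw [Int.floor_eq_iff]
      constructor
      · push_cast; linarith
      · push_cast; linarith
    · intro h
      have hf1 : ((j : ℕ) : ℝ) ≤ (T - a) * n := by
        have := Int.floor_le ((T - a) * n)
        rw [← hm_def] at this
        have : ((m : ℤ) : ℝ) ≤ (T - a) * n := this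
        rw [← h] at this
        exact_mod_cast this
      have hf2 : (T - a) * n < (j : ℕ) + 1 := by
        have := Int.lt_floor_add_one ((T - a) * n)
        rw [← hm_def] at this
        rw [← h] at this
        push_cast at this
        exact_mod_cast this
      have hmem : T - (j : ℕ) * u ∈ Set.Ico a (a + u) := by
        constructor
        · nlinarith
        · nlinarith
      have : toIcoMod zero_lt_one a (T - (j : ℕ) * u) = T - (j : ℕ) * u :=
        (toIcoMod_eq_self zero_lt_one).mpr ⟨hmem.1, lt_of_lt_of_le hmem.2 (by linarith)⟩
      rw [this]
      exact hmem.2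
  have hmn' : m.toNat < n := by omega
  set j₀ : Fin n := ⟨m.toNat, hmn'⟩ with hj₀
  have hj₀m : ((j₀ : ℕ) : ℤ) = m := by
    rw [hj₀]
    simp [Int.toNat_of_nonneg hm0]
  refine ⟨j₀, (key j₀).mpr hj₀m, fun y hy => ?_⟩
  have hy' := (key y).mp hy
  apply Fin.ext
  have h2 : ((y : ℕ) : ℤ) = ((j₀ : ℕ) : ℤ) := by rw [hy', hj₀m]
  exact_mod_cast h2


lemma arc_subset_Icc (a w : ℝ) :
    arc a w ⊆ (fun t : ℝ => (t : AddCircle (1:ℝ))) '' Set.Icc a (a + w) :=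
  Set.image_mono Set.Ico_subset_Icc_self

lemma transTorus_coeFn {d : ℕ} (γ : Torus d) (f : Lp ℝ 2 (volume : Measure (Torus d))) :
    ⇑(transTorus γ f) =ᵐ[(volume : Measure (Torus d))] fun x => f (x - γ) :=
  Lp.coeFn_compMeasurePreserving f (measurePreserving_sub_right volume γ)

lemma ae_comp_sub {d : ℕ} (γ : Torus d) {F G : Torus d → ℝ}
    (h : F =ᵐ[(volume : Measure (Torus d))] G) :
    (fun x => F (x - γ)) =ᵐ[(volume : Measure (Torus d))] fun x => G (x - γ) :=
  (measurePreserving_sub_right volume γ).quasiMeasurePreserving.ae_eq_comp h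

end TorusAux

open TorusAux

set_option maxHeartbeats 2000000 in
theorem exists_projection_on_torus_ball_finite_subgroup_decomposition
    (d : ℕ) (x₀ : Torus d) (r : ℝ) (hr : 0 < r) :
    ∃ (G : AddSubgroup (Torus d)) (hG : (G : Set (Torus d)).Finite)
      (P : Lp ℝ 2 (volume : Measure (Torus d)) →L[ℝ] Lp ℝ 2 (volume : Measure (Torus d))),
      -- `P` is an orthogonal projection
      (∀ f g, ⟪P f, g⟫ = ⟪f, P g⟫) ∧
      (∀ f, P (P f) = P f) ∧
      -- `P` is localized on the ball `B = ball x₀ r`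
      (∃ K : Set (Torus d), IsCompact K ∧ K ⊆ Metric.ball x₀ r ∧
        (∀ f, ∀ᵐ x ∂(volume : Measure (Torus d)), x ∉ K → P f x = 0) ∧
        (∀ f, (∀ᵐ x ∂(volume : Measure (Torus d)), x ∈ K → f x = 0) → P f = 0)) ∧
      -- the conjugated projections are pairwise orthogonal
      (∀ γ γ' : Torus d, γ ∈ G → γ' ∈ G → γ ≠ γ' → ∀ f,
        transTorus γ (P (transTorus (-γ) (transTorus γ' (P (transTorus (-γ') f))))) = 0) ∧
      -- `Σ_{γ ∈ G} T_γ P T_{-γ} f = f` for all `f ∈ L²(𝕋^d)`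
      (∀ f, ∑ γ ∈ hG.toFinset, transTorus γ (P (transTorus (-γ) f)) = f) := by
  classical
  -- the scale
  obtain ⟨n, hn, hrn⟩ : ∃ n : ℕ, 0 < n ∧ r⁻¹ < (n : ℝ) :=
    ⟨⌈r⁻¹⌉₊ + 1, Nat.succ_pos _,
      lt_of_le_of_lt (Nat.le_ceil r⁻¹) (by exact_mod_cast Nat.lt_succ_self _)⟩
  set u : ℝ := (n : ℝ)⁻¹ with hu_def
  have hn' : (0 : ℝ) < n := by exact_mod_cast hn
  have hu : 0 < u := by positivity
  have hun : (n : ℝ) * u = 1 := mul_inv_cancel₀ (ne_of_gt hn')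
  have hu1 : u ≤ 1 := by
    rw [hu_def]; exact inv_le_one_of_one_le₀ (by exact_mod_cast hn)
  have hur : u < r := by
    have h2 : r * r⁻¹ = 1 := mul_inv_cancel₀ (ne_of_gt hr)
    rw [hu_def, ← one_div, div_lt_iff₀ hn']
    nlinarith
  -- lifts of the center
  have hbe : ∀ i, ∃ t : ℝ, ((t : ℝ) : AddCircle (1 : ℝ)) = x₀ i :=
    fun i => QuotientAddGroup.mk_surjective (x₀ i)
  choose b hb using hbe
  set c : Fin d → ℝ := fun i => b i - u / 2 with hc_def
  -- the fundamental cube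
  set s : Set (Torus d) := Set.univ.pi (fun i : Fin d => arc (c i) u) with hs_def
  have hs : MeasurableSet s := MeasurableSet.univ_pi fun i => measurableSet_arc hu1
  -- the subgroup: n-torsion points
  set G : AddSubgroup (Torus d) :=
    { carrier := {γ : Torus d | n • γ = 0}
      zero_mem' := smul_zero n
      add_mem' := fun {a} {b'} ha hb' => by
        simp only [Set.mem_setOf_eq] at *
        rw [smul_add, ha, hb', add_zero]
      neg_mem' := fun {a} ha => by
        simp only [Set.mem_setOf_eq] at *
        rw [smul_neg, ha, neg_zero] } with hG_def
  have hGmem : ∀ γ : Torus d, γ ∈ G ↔ n • γ = 0 := fun γ => Iff.rfl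
  -- the enumeration of G
  set Φ : (Fin d → Fin n) → Torus d :=
    fun v i => ((((v i : ℕ) : ℝ) * u : ℝ) : AddCircle (1 : ℝ)) with hΦ_def
  have hΦG : ∀ v, Φ v ∈ G := by
    intro v
    rw [hGmem]
    funext i
    rw [Pi.smul_apply, ← AddCircle.coe_nsmul, Pi.zero_apply]
    rw [AddCircle.coe_eq_zero_iff]
    refine ⟨(v i : ℕ), ?_⟩
    rw [zsmul_eq_mul, mul_one, nsmul_eq_mul]
    push_cast
    symm
    calc (n : ℝ) * (((v i : ℕ) : ℝ) * u) = ((v i : ℕ) : ℝ) * ((n : ℝ) * u) := by ring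
    _ = ((v i : ℕ) : ℝ) := by rw [hun, mul_one]
  have hGΦ : ∀ γ ∈ G, ∃ v, Φ v = γ := by
    intro γ hγ
    rw [hGmem] at hγ
    have hγi : ∀ i, ∃ j : Fin n, ((((j : ℕ) : ℝ) * u : ℝ) : AddCircle (1 : ℝ)) = γ i := by
      intro i
      obtain ⟨t, ht⟩ := QuotientAddGroup.mk_surjective (γ i)
      have h0 : n • γ i = 0 := congrFun hγ i
      rw [← ht, ← AddCircle.coe_nsmul, AddCircle.coe_eq_zero_iff] at h0
      obtain ⟨k, hk⟩ := h0
      rw [zsmul_eq_mul, mul_one, nsmul_eq_mul] at hk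
      have hkn : (0:ℤ) ≤ k % n := Int.emod_nonneg k (by exact_mod_cast hn.ne')
      have hkn' : k % n < n := Int.emod_lt_of_pos k (by exact_mod_cast hn)
      refine ⟨⟨(k % n).toNat, by omega⟩, ?_⟩
      rw [← ht, QuotientAddGroup.eq_iff_sub_mem]
      refine AddSubgroup.mem_zmultiples_iff.mpr ⟨-(k / n), ?_⟩
      have hval : ((((k % n).toNat : ℕ) : ℝ)) = ((k % n : ℤ) : ℝ) := by
        exact_mod_cast congrArg (Int.cast : ℤ → ℝ) (Int.toNat_of_nonneg hkn)
      have hmod : ((k % n : ℤ) : ℝ) = (k : ℝ) - (n : ℝ) * ((k / n : ℤ) : ℝ) := by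
        have h := Int.emod_def k (n : ℤ)
        exact_mod_cast congrArg (Int.cast : ℤ → ℝ) h
      have ht' : (k : ℝ) * u = t := by
        calc (k : ℝ) * u = ((n : ℝ) * t) * u := by rw [hk]
        _ = t * ((n : ℝ) * u) := by ring
        _ = t := by rw [hun, mul_one]
      rw [zsmul_eq_mul, mul_one]
      have : ((-(k / n) : ℤ) : ℝ) = -(((k / n : ℤ)) : ℝ) := by push_cast; ring
      rw [this]
      have hfin : (((((k % n).toNat : ℕ) : ℝ)) * u) - t = -(((k / n : ℤ)) : ℝ) := by
        rw [hval, hmod, ← ht']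
        calc ((k : ℝ) - (n : ℝ) * ((k / n : ℤ) : ℝ)) * u - (k : ℝ) * u
            = -(((k / n : ℤ) : ℝ)) * ((n : ℝ) * u) := by ring
        _ = -(((k / n : ℤ) : ℝ)) := by rw [hun, mul_one]
      exact hfin.symm
    choose v hv using hγi
    exact ⟨v, funext hv⟩
  have hΦinj : Function.Injective Φ := by
    intro v w h
    funext i
    have hi : ((((v i : ℕ) : ℝ) * u : ℝ) : AddCircle (1 : ℝ))
        = ((((w i : ℕ) : ℝ) * u : ℝ) : AddCircle (1 : ℝ)) := congrFun h i
    rw [QuotientAddGroup.eq_iff_sub_mem] at hi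
    obtain ⟨k, hk⟩ := AddSubgroup.mem_zmultiples_iff.mp hi
    rw [zsmul_eq_mul, mul_one] at hk
    have hk' : (k : ℝ) = (((v i : ℕ) : ℝ) - ((w i : ℕ) : ℝ)) * u := by rw [hk]; ring
    have hb1 : ((v i : ℕ) : ℝ) < n := by exact_mod_cast (v i).isLt
    have hb2 : ((w i : ℕ) : ℝ) < n := by exact_mod_cast (w i).isLt
    have hb3 : (0:ℝ) ≤ ((v i : ℕ) : ℝ) := by positivity
    have hb4 : (0:ℝ) ≤ ((w i : ℕ) : ℝ) := by positivity
    have hk1 : (k : ℝ) < 1 := by nlinarith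
    have hk2 : (-1 : ℝ) < (k : ℝ) := by nlinarith
    have hk0 : k = 0 := by
      have l1 : k < 1 := by exact_mod_cast hk1
      have l2 : -1 < k := by exact_mod_cast hk2
      omega
    rw [hk0] at hk'
    simp only [Int.cast_zero] at hk'
    have : ((v i : ℕ) : ℝ) = ((w i : ℕ) : ℝ) := by
      rcases mul_eq_zero.mp hk'.symm with h' | h'
      · linarith
      · exact absurd h' (ne_of_gt hu)
    exact Fin.ext (by exact_mod_cast this)
  have hGfin : (G : Set (Torus d)).Finite :=
    Set.Finite.subset (Set.finite_range Φ) (fun γ hγ => by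
      obtain ⟨v, hv⟩ := hGΦ γ hγ
      exact ⟨v, hv⟩)
  -- the tiling
  have tile : ∀ x : Torus d, ∃! γ : Torus d, γ ∈ G ∧ x - γ ∈ s := by
    intro x
    have h1 : ∀ i, ∃! j : Fin n,
        x i - ((((j : ℕ) : ℝ) * u : ℝ) : AddCircle (1 : ℝ)) ∈ arc (c i) u :=
      fun i => existsUnique_arc_shift n hn (c i) (x i)
    choose v hv hv' using h1
    refine ⟨Φ v, ⟨hΦG v, ?_⟩, ?_⟩
    · rw [hs_def, Set.mem_univ_pi]
      intro i
      exact hv i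
    · rintro γ ⟨hγG, hγs⟩
      obtain ⟨w, rfl⟩ := hGΦ γ hγG
      refine congrArg Φ (funext fun i => ?_)
      refine hv' i (w i) ?_
      rw [hs_def, Set.mem_univ_pi] at hγs
      exact hγs i
  -- the compact localization set
  have hcont : Continuous (fun t : ℝ => (t : AddCircle (1 : ℝ))) :=
    AddCircle.continuous_mk' 1
  set K : Set (Torus d) :=
    Set.univ.pi (fun i : Fin d => (fun t : ℝ => (t : AddCircle (1 : ℝ))) '' Set.Icc (c i) (c i + u))
    with hK_def
  have hKcomp : IsCompact K := isCompact_univ_pi fun i => isCompact_Icc.image hcont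
  have hsK : s ⊆ K := by
    intro x hx
    rw [hs_def, Set.mem_univ_pi] at hx
    rw [hK_def, Set.mem_univ_pi]
    exact fun i => arc_subset_Icc (c i) u (hx i)
  have hKball : K ⊆ Metric.ball x₀ r := by
    intro x hx
    rw [hK_def, Set.mem_univ_pi] at hx
    rw [Metric.mem_ball, dist_pi_lt_iff hr]
    intro i
    obtain ⟨t, ht, hte⟩ := hx i
    have hci : c i = b i - u / 2 := rfl
    have habs : |t - b i| ≤ u / 2 := by
      rw [hci] at ht
      rw [abs_le]
      constructor <;> [linarith [ht.1]; linarith [ht.2]]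
    have hnorm : dist (x i) (x₀ i) = |t - b i| := by
      rw [← hte, ← hb i, dist_eq_norm, ← AddCircle.coe_sub]
      exact (AddCircle.norm_coe_eq_abs_iff 1 one_ne_zero).mpr
        (by rw [abs_one]; linarith [hu1])
    rw [hnorm]
    linarith
  -- the projection
  set P : Lp ℝ 2 (volume : Measure (Torus d)) →L[ℝ] Lp ℝ 2 (volume : Measure (Torus d)) :=
    mulInd s hs with hP_def
  refine ⟨G, hGfin, P, fun f g => mulInd_selfAdjoint s hs f g, fun f => mulInd_idem s hs f,
    ⟨K, hKcomp, hKball, ?_, ?_⟩, ?_, ?_⟩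
  · -- vanishing outside K
    intro f
    filter_upwards [mulInd_coeFn s hs f] with x hx hxK
    rw [hx]
    exact Set.indicator_of_notMem (fun hxs => hxK (hsK hxs)) _
  · -- vanishing on functions vanishing on K
    intro f hf
    apply Lp.ext
    filter_upwards [mulInd_coeFn s hs f, hf, Lp.coeFn_zero ℝ 2 (volume : Measure (Torus d))]
      with x h1 h2 h3
    rw [h1, h3]
    by_cases hxs : x ∈ s
    · rw [Set.indicator_of_mem hxs, h2 (hsK hxs), Pi.zero_apply]
    · rw [Set.indicator_of_notMem hxs, Pi.zero_apply]
  · -- pairwise orthogonality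
    intro γ γ' hγ hγ' hne f
    set g := transTorus (-γ') f with hg_def
    set δ : Torus d := γ' - γ with hδ_def
    have hδG : δ ∈ G := AddSubgroup.sub_mem G hγ' hγ
    have hδ0 : δ ≠ 0 := sub_ne_zero.mpr (Ne.symm hne)
    have hPzero : P (transTorus (-γ) (transTorus γ' (P g))) = 0 := by
      apply Lp.ext
      have hw1 : ⇑(transTorus (-γ) (transTorus γ' (P g)))
          =ᵐ[(volume : Measure (Torus d))] fun x => (transTorus γ' (P g)) (x - (-γ)) :=
        transTorus_coeFn (-γ) _
      have hw2 : ⇑(transTorus γ' (P g)) =ᵐ[(volume : Measure (Torus d))]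
          fun y => (P g) (y - γ') := transTorus_coeFn γ' _
      have hw4 : ⇑(P g) =ᵐ[(volume : Measure (Torus d))] s.indicator ⇑g := mulInd_coeFn s hs g
      have hw3 : (fun x : Torus d => (transTorus γ' (P g)) (x - (-γ)))
          =ᵐ[(volume : Measure (Torus d))] fun x => (P g) ((x - (-γ)) - γ') :=
        ae_comp_sub (-γ) hw2
      have hw5 : (fun x : Torus d => (P g) ((x - (-γ)) - γ'))
          = fun x : Torus d => (P g) (x - δ) := by
        funext x
        congr 1
        rw [hδ_def]
        abel
      have hw6 : (fun x : Torus d => (P g) (x - δ))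
          =ᵐ[(volume : Measure (Torus d))] fun x => s.indicator ⇑g (x - δ) :=
        ae_comp_sub δ hw4
      have hw : ⇑(transTorus (-γ) (transTorus γ' (P g)))
          =ᵐ[(volume : Measure (Torus d))] fun x => s.indicator ⇑g (x - δ) :=
        hw1.trans ((hw3.trans (hw5 ▸ hw6)))
      filter_upwards [mulInd_coeFn s hs (transTorus (-γ) (transTorus γ' (P g))),
        indicator_ae_congr (s := s) hw,
        Lp.coeFn_zero ℝ 2 (volume : Measure (Torus d))] with x h1 h2 h3
      rw [h1, h2, h3, Pi.zero_apply]
      by_cases hxs : x ∈ s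
      · rw [Set.indicator_of_mem hxs]
        by_cases hxδ : x - δ ∈ s
        · exfalso
          obtain ⟨γ₀, -, huniq⟩ := tile x
          have e1 : (0 : Torus d) = γ₀ := huniq 0 ⟨AddSubgroup.zero_mem G, by rwa [sub_zero]⟩
          have e2 : δ = γ₀ := huniq δ ⟨hδG, hxδ⟩
          exact hδ0 (e2.trans e1.symm)
        · exact Set.indicator_of_notMem hxδ _
      · exact Set.indicator_of_notMem hxs _
    rw [hPzero, map_zero]
  · -- the sum identity
    intro f
    apply Lp.ext
    set F : Finset (Torus d) := hGfin.toFinset with hF_def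
    have hterm : ∀ γ ∈ F, ⇑(transTorus γ (P (transTorus (-γ) f)))
        =ᵐ[(volume : Measure (Torus d))]
        fun x => s.indicator (fun y => f (y + γ)) (x - γ) := by
      intro γ _
      have h1 : ⇑(transTorus γ (P (transTorus (-γ) f)))
          =ᵐ[(volume : Measure (Torus d))] fun x => (P (transTorus (-γ) f)) (x - γ) :=
        transTorus_coeFn γ _
      have h2 : ⇑(P (transTorus (-γ) f)) =ᵐ[(volume : Measure (Torus d))]
          s.indicator ⇑(transTorus (-γ) f) := mulInd_coeFn s hs _
      have h3 : ⇑(transTorus (-γ) f) =ᵐ[(volume : Measure (Torus d))]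
          fun y => f (y - (-γ)) := transTorus_coeFn (-γ) f
      have h3' : (fun y : Torus d => f (y - (-γ))) = fun y => f (y + γ) := by
        funext y; rw [sub_neg_eq_add]
      have h4 : s.indicator ⇑(transTorus (-γ) f)
          =ᵐ[(volume : Measure (Torus d))] s.indicator (fun y => f (y + γ)) :=
        indicator_ae_congr (h3.trans (h3' ▸ EventuallyEq.rfl))
      exact h1.trans (ae_comp_sub γ (h2.trans h4))
    have hall : ∀ᵐ x ∂(volume : Measure (Torus d)), ∀ γ ∈ F,
        (transTorus γ (P (transTorus (-γ) f))) x
          = s.indicator (fun y => f (y + γ)) (x - γ) :=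
      (Finset.eventually_all F).mpr hterm
    filter_upwards [coeFn_finset_sum F (fun γ => transTorus γ (P (transTorus (-γ) f))), hall]
      with x hsum hx
    rw [hsum]
    obtain ⟨γ₀, ⟨hγ₀G, hγ₀s⟩, huniq⟩ := tile x
    have hγ₀F : γ₀ ∈ F := hGfin.mem_toFinset.mpr hγ₀G
    rw [Finset.sum_congr rfl hx]
    rw [Finset.sum_eq_single_of_mem γ₀ hγ₀F ?side]
    · rw [Set.indicator_of_mem hγ₀s, sub_add_cancel]
    case side =>
      intro γ hγF hneq
      refine Set.indicator_of_notMem (fun hmem => hneq ?_) _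
      exact (huniq γ ⟨hGfin.mem_toFinset.mp hγF, hmem⟩).trans
        (huniq γ₀ ⟨hγ₀G, hγ₀s⟩).symm

end
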